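/- The function θ : (Z/2)^n → {±1} defined by θ(x) = (-1)^{ρ(x)(ρ(x)-1)/2}, where ρ(x) = Σ_i x_i ∈ Z, satisfies θ(x)θ(y)/θ(x+y) = (-1)^{ρ(x)ρ(y) + x·y} for all x, y; i.e. the cotriangular structure R(x,y) = (-1)^{ρ(x)ρ(y)+x·y} is the group coboundary of θ. -/

import Mathlib

/-- `ρ(x) = Σ_i x_i` as a natural number. -/
def rho {n : ℕ} (x : Fin n → ZMod 2) : ℕ := ∑ i, (x i).val

/-- `x·y = Σ_i x_i y_i`. -/
def dotp {n : ℕ} (x y : Fin n → ZMod 2) : ℕ := ∑ i, (x i).val * (y i).val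

/-- `θ(x) = (-1)^{ρ(x)(ρ(x)-1)/2}`. -/
def theta (k : Type*) [Field k] {n : ℕ} (x : Fin n → ZMod 2) : k :=
  (-1 : k) ^ (rho x * (rho x - 1) / 2)

lemma two_mul_tri (a : ℕ) : 2 * (a * (a - 1) / 2) + a = a * a := by
  cases a with
  | zero => simp
  | succ m =>
    have hd : 2 ∣ (m + 1) * m := by
      rw [mul_comm]
      exact (Nat.even_mul_succ_self m).two_dvd
    simp only [Nat.add_sub_cancel]
    rw [Nat.mul_div_cancel' hd]
    ring

lemma neg_one_pow_eq_of_even_add {k : Type*} [Field k] (e f : ℕ) (h : Even (e + f)) :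
    (-1 : k) ^ e = (-1 : k) ^ f := by
  rw [Nat.even_add] at h
  rcases Nat.even_or_odd e with he | he
  · rw [he.neg_one_pow, (h.mp he).neg_one_pow]
  · have hf : Odd f := by
      rw [← Nat.not_even_iff_odd] at he ⊢
      tauto
    rw [he.neg_one_pow, hf.neg_one_pow]

/-- `θ(x)θ(y)/θ(x+y) = (-1)^{ρ(x)ρ(y) + x·y}`, i.e. the cotriangular
structure `R(x,y) = (-1)^{ρ(x)ρ(y)+x·y}` is the coboundary of `θ`.  Moreover `θ` takes
values in `{1, -1}`. -/
theorem theta_coboundary {k : Type*} [Field k] (hk : (2 : k) ≠ 0) {n : ℕ} :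
    (∀ x y : Fin n → ZMod 2,
      theta k x * theta k y =
        ((-1 : k) ^ (rho x * rho y + dotp x y)) * theta k (x + y)) ∧
    (∀ x : Fin n → ZMod 2, theta k x = 1 ∨ theta k x = -1) := by
  constructor
  · intro x y
    have hcoord : ∀ a b : ZMod 2, (a + b).val + 2 * (a.val * b.val) = a.val + b.val := by decide
    have hc : rho (x + y) + 2 * dotp x y = rho x + rho y := by
      unfold rho dotp
      rw [Finset.mul_sum, ← Finset.sum_add_distrib, ← Finset.sum_add_distrib]
      exact Finset.sum_congr rfl fun i _ => hcoord (x i) (y i)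
    unfold theta
    set a := rho x with ha
    set b := rho y with hb
    set c := rho (x + y) with hcdef
    set d := dotp x y with hd
    rw [← pow_add, ← pow_add]
    apply neg_one_pow_eq_of_even_add
    set A := a * (a - 1) / 2 with hA
    set B := b * (b - 1) / 2 with hB
    set C := c * (c - 1) / 2 with hC
    have h2A := two_mul_tri a
    have h2B := two_mul_tri b
    have h2C := two_mul_tri c
    rw [← hA] at h2A
    rw [← hB] at h2B
    rw [← hC] at h2C
    have hAz : 2 * (A : ℤ) + a = a * a := by exact_mod_cast h2A
    have hBz : 2 * (B : ℤ) + b = b * b := by exact_mod_cast h2B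
    have hCz : 2 * (C : ℤ) + c = c * c := by exact_mod_cast h2C
    have hcz : (c : ℤ) + 2 * d = a + b := by exact_mod_cast hc
    have key : 2 * ((A : ℤ) + B + (a * b + d + C)) =
        4 * ((A : ℤ) + B + d * d + a * b - d * a - d * b + d) := by
      linear_combination (-1 : ℤ) * hAz + (-1 : ℤ) * hBz + hCz +
        ((c : ℤ) + a + b - 2 * d - 1) * hcz
    have hev : Even ((A : ℤ) + B + (a * b + d + C)) := by
      refine ⟨(A : ℤ) + B + d * d + a * b - d * a - d * b + d, by linarith⟩
    have : Even (A + B + (a * b + d + C)) := by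
      rw [← Int.even_coe_nat]
      push_cast
      push_cast at hev
      convert hev using 2
    exact this
  · intro x
    rcases Nat.even_or_odd (rho x * (rho x - 1) / 2) with h | h
    · left; exact h.neg_one_pow
    · right; exact h.neg_one_pow
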